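/- For all natural numbers n ≥ 1: (1/2^n) · Σ_{i=0}^{n} C(n,i) · max(i, n−i)/n = 1/2 + (1/2^n)·C(n−1, ⌊(n−1)/2⌋). -/

import Mathlib

open Finset

lemma aux1 (n i : ℕ) (h1 : 1 ≤ i) (h2 : 1 ≤ n) :
    i * n.choose i = n * (n-1).choose (i-1) := by
  have H := Nat.add_one_mul_choose_eq (n-1) (i-1)
  have hn : n - 1 + 1 = n := by omega
  have hi : i - 1 + 1 = i := by omega
  simp only [Nat.succ_eq_add_one, hn, hi] at H
  rw [H, Nat.mul_comm]

lemma aux2 (n i : ℕ) (h2 : i ≤ n) (hn : 1 ≤ n) :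
    (n - i) * n.choose i = n * (n-1).choose i := by
  rcases eq_or_lt_of_le h2 with rfl | h
  · simp [Nat.choose_eq_zero_of_lt (show i - 1 < i by omega)]
  · have hs : n.choose i = n.choose (n - i) := (Nat.choose_symm (le_of_lt h)).symm
    rw [hs, aux1 n (n-i) (by omega) hn]
    congr 1
    rw [show n - i - 1 = (n-1) - i by omega, Nat.choose_symm (by omega)]

lemma aux3 (n : ℕ) (hn : 1 ≤ n) : (n-1).choose (n/2) = (n-1).choose ((n-1)/2) := by
  rcases Nat.even_or_odd n with ⟨k, hk⟩ | ⟨k, hk⟩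
  · subst hk
    rw [show (k+k)/2 = k by omega, show (k+k-1)/2 = k-1 by omega,
      ← Nat.choose_symm (show k ≤ k+k-1 by omega)]
    congr 1; omega
  · subst hk; congr 1; omega

lemma auxR1 (n i : ℕ) (h1 : 1 ≤ i) (h2 : i ≤ n) (hn : 1 ≤ n) :
    (i : ℝ) * (n.choose i : ℝ) = (n : ℝ) * ((n-1).choose (i-1) : ℝ) := by
  exact_mod_cast congrArg (Nat.cast : ℕ → ℝ) (aux1 n i h1 hn)

lemma auxR2 (n i : ℕ) (h2 : i ≤ n) (hn : 1 ≤ n) :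
    ((n : ℝ) - i) * (n.choose i : ℝ) = (n : ℝ) * ((n-1).choose i : ℝ) := by
  have := congrArg (Nat.cast : ℕ → ℝ) (aux2 n i h2 hn)
  push_cast [Nat.cast_sub h2] at this
  exact this

lemma keyA (n : ℕ) (hn : 1 ≤ n) :
    ∑ i ∈ range (n+1), (n.choose i : ℝ) * |2*(i:ℝ) - n|
      = 2*n*((n-1).choose ((n-1)/2)) := by
  set g : ℕ → ℝ := fun i => ((n-1).choose i : ℝ) with hg
  set m := n/2 + 1 with hm
  have hm1 : m ≤ n + 1 := by omega
  rw [range_eq_Ico,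
    ← Finset.sum_Ico_consecutive (fun i => (n.choose i : ℝ) * |2*(i:ℝ) - n|)
      (Nat.zero_le m) hm1]
  have hlow : ∑ i ∈ Finset.Ico 0 m, (n.choose i : ℝ) * |2*(i:ℝ) - n|
      = (n:ℝ) * g (n/2) := by
    have h1 : ∑ i ∈ Finset.Ico 0 m, (n.choose i : ℝ) * |2*(i:ℝ) - n|
        = ∑ i ∈ Finset.Ico 0 m, (n.choose i : ℝ) * ((n:ℝ) - 2*i) := by
      refine Finset.sum_congr rfl fun i hi => ?_
      simp only [Finset.mem_Ico] at hi
      have h2i : 2*(i:ℝ) - n ≤ 0 := by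
        have : 2*i ≤ n := by omega
        have := (Nat.cast_le (α := ℝ)).2 this
        push_cast at this
        linarith
      rw [abs_of_nonpos h2i]; ring
    rw [h1, Finset.sum_eq_sum_Ico_succ_bot (by omega : 0 < m)]
    have h2 : ∑ i ∈ Finset.Ico 1 m, (n.choose i : ℝ) * ((n:ℝ) - 2*i)
        = ∑ i ∈ Finset.Ico 1 m, ((n:ℝ) * g i - (n:ℝ) * g (i-1)) := by
      refine Finset.sum_congr rfl fun i hi => ?_
      simp only [Finset.mem_Ico] at hi
      have hin : i ≤ n := by omega
      have e1 := auxR1 n i hi.1 hin hn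
      have e2 := auxR2 n i hin hn
      simp only [hg]
      linear_combination e2 - e1
    rw [h2, Finset.sum_Ico_eq_sum_range]
    have h3 : ∑ j ∈ range (m - 1), ((n:ℝ) * g (1+j) - (n:ℝ) * g (1+j-1))
        = ∑ j ∈ range (m - 1), ((n:ℝ) * g (j+1) - (n:ℝ) * g j) := by
      refine Finset.sum_congr rfl fun j _ => ?_
      rw [Nat.add_comm 1 j, Nat.add_sub_cancel]
    rw [h3, Finset.sum_range_sub (fun j => (n:ℝ) * g j)]
    have : m - 1 = n/2 := by omega
    rw [this]
    simp [hg]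
  have hhigh : ∑ i ∈ Finset.Ico m (n+1), (n.choose i : ℝ) * |2*(i:ℝ) - n|
      = (n:ℝ) * g (n/2) := by
    have h1 : ∑ i ∈ Finset.Ico m (n+1), (n.choose i : ℝ) * |2*(i:ℝ) - n|
        = ∑ i ∈ Finset.Ico m (n+1), ((n:ℝ) * g (i-1) - (n:ℝ) * g i) := by
      refine Finset.sum_congr rfl fun i hi => ?_
      simp only [Finset.mem_Ico] at hi
      have hge : (0:ℝ) ≤ 2*(i:ℝ) - n := by
        have : n ≤ 2*i := by omega
        have := (Nat.cast_le (α := ℝ)).2 this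
        push_cast at this
        linarith
      rw [abs_of_nonneg hge]
      have hin : i ≤ n := by omega
      have hi1 : 1 ≤ i := by omega
      have e1 := auxR1 n i hi1 hin hn
      have e2 := auxR2 n i hin hn
      simp only [hg]
      linear_combination e1 - e2
    rw [h1, Finset.sum_Ico_eq_sum_range]
    have h3 : ∑ j ∈ range (n + 1 - m), ((n:ℝ) * g (m+j-1) - (n:ℝ) * g (m+j))
        = ∑ j ∈ range (n + 1 - m), ((fun j => (n:ℝ) * g (m-1+j)) j
            - (fun j => (n:ℝ) * g (m-1+j)) (j+1)) := by
      refine Finset.sum_congr rfl fun j _ => ?_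
      simp only
      rw [show m+j-1 = m-1+j by omega, show m+j = m-1+(j+1) by omega]
    rw [h3, Finset.sum_range_sub' (fun j => (n:ℝ) * g (m-1+j))]
    have e1 : m - 1 + 0 = n/2 := by omega
    have e2 : m - 1 + (n + 1 - m) = n := by omega
    rw [e1, e2]
    have : g n = 0 := by
      simp [hg, Nat.choose_eq_zero_of_lt (show n - 1 < n by omega)]
    rw [this]
    ring
  rw [hlow, hhigh, hg]
  simp only
  rw [aux3 n hn]
  ring

/-- posterior single-target vulnerability of the pure shuffler
for binary attributes under a uniform prior. -/
theorem stmt2 (n : ℕ) (hn : 1 ≤ n) :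
    (1 / 2 ^ n) * ∑ i ∈ Finset.range (n + 1),
        (n.choose i : ℝ) * (max i (n - i) : ℕ) / n
      = 1 / 2 + (1 / 2 ^ n) * ((n - 1).choose ((n - 1) / 2)) := by
  have hn0 : (n : ℝ) ≠ 0 := by positivity
  have hterm : ∀ i ∈ Finset.range (n+1),
      (n.choose i : ℝ) * (max i (n - i) : ℕ) / n
        = (n.choose i : ℝ)/2 + (n.choose i : ℝ) * |2*(i:ℝ) - n| / (2*n) := by
    intro i hi
    simp only [Finset.mem_range] at hi
    have hin : i ≤ n := by omega
    have hcast : ((n - i : ℕ) : ℝ) = (n:ℝ) - i := by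
      exact Nat.cast_sub hin
    rcases le_or_gt (2*i) n with h | h
    · have hmax : max i (n-i) = n - i := max_eq_right (by omega)
      have habs : |2*(i:ℝ) - n| = (n:ℝ) - 2*i := by
        rw [abs_of_nonpos (by
          have : (2*i : ℝ) ≤ n := by exact_mod_cast h
          linarith)]
        ring
      rw [hmax, hcast, habs]
      field_simp
      ring
    · have hmax : max i (n-i) = i := max_eq_left (by omega)
      have habs : |2*(i:ℝ) - n| = 2*(i:ℝ) - n := by
        rw [abs_of_nonneg (by
          have : (n : ℝ) ≤ 2*i := by exact_mod_cast h.le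
          linarith)]
      rw [hmax, habs]
      field_simp
      ring
  rw [Finset.sum_congr rfl hterm, Finset.sum_add_distrib]
  have h1 : ∑ i ∈ Finset.range (n+1), (n.choose i : ℝ)/2 = 2^n / 2 := by
    rw [← Finset.sum_div]
    congr 1
    exact_mod_cast congrArg (Nat.cast : ℕ → ℝ) (Nat.sum_range_choose n)
  have h2 : ∑ i ∈ Finset.range (n+1), (n.choose i : ℝ) * |2*(i:ℝ) - n| / (2*n)
      = ((n-1).choose ((n-1)/2) : ℝ) := by
    rw [← Finset.sum_div, keyA n hn]
    field_simp
  rw [h1, h2, mul_add]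
  congr 1
  have h2n : (2:ℝ)^n ≠ 0 := by positivity
  field_simp
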